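/- Let G be a convex bipartite graph satisfying Property B with a Hamiltonian path P whose X-vertices appear (as an ordered subsequence of P) in the convex order, and let 1 < p < q < n. If neither x_p nor x_q is an endpoint or a penultimate vertex of P, then P contains at most q − p vertices of N_G[X_{p..q}]. -/

import Mathlib

open Finset SimpleGraph

/-- A convex bipartite graph with parts `X = Fin n` (with its natural order giving the
convex ordering) and `Y`: each `y : Y` has a consecutive neighborhood in `Fin n`. -/
structure ConvexBip (n : ℕ) (Y : Type*) where
  adj : Fin n → Y → Prop
  convex : ∀ (y : Y) (i₁ i₂ i₃ : Fin n),
    i₁ ≤ i₂ → i₂ ≤ i₃ → adj i₁ y → adj i₃ y → adj i₂ y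

namespace ConvexBip

variable {n : ℕ} {Y : Type*}

/-- The underlying bipartite simple graph on `Fin n ⊕ Y`. -/
def toGraph (G : ConvexBip n Y) : SimpleGraph (Fin n ⊕ Y) where
  Adj u v := (∃ i y, u = Sum.inl i ∧ v = Sum.inr y ∧ G.adj i y) ∨
             (∃ i y, u = Sum.inr y ∧ v = Sum.inl i ∧ G.adj i y)
  symm := ⟨by rintro u v (⟨i, y, rfl, rfl, h⟩ | ⟨i, y, rfl, rfl, h⟩)
              · exact Or.inr ⟨i, y, rfl, rfl, h⟩
              · exact Or.inl ⟨i, y, rfl, rfl, h⟩⟩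
  loopless := ⟨by rintro u (⟨i, y, rfl, h, _⟩ | ⟨i, y, rfl, h, _⟩) <;> simp_all⟩

/-- `N_G[X_{p..q}]`: the set of `y ∈ Y` whose whole neighborhood lies in `{x_p, …, x_q}`. -/
def NIn (G : ConvexBip n Y) (p q : Fin n) : Set Y :=
  {y | ∀ i, G.adj i y → p ≤ i ∧ i ≤ q}

/-- `N'_G[X_{p..q}]`: the set of `y ∈ Y` having at least two neighbors in `{x_p, …, x_q}`. -/
noncomputable def NIn' (G : ConvexBip n Y) (p q : Fin n) : Set Y :=
  {y | 2 ≤ {i : Fin n | G.adj i y ∧ p ≤ i ∧ i ≤ q}.ncard}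

/-- Degree of a vertex `y ∈ Y`. -/
noncomputable def degY (G : ConvexBip n Y) (y : Y) : ℕ := {i : Fin n | G.adj i y}.ncard

/-- Property A. -/
def PropertyA (G : ConvexBip n Y) : Prop :=
  (∀ p q : Fin n, p < q →
      ((p.val = 0 ∧ q.val < n - 1) ∨ (0 < p.val ∧ q.val = n - 1) ∨
        (0 < p.val ∧ q.val < n - 1)) →
      (G.NIn p q).ncard ≤ q.val - p.val) ∧
  (∀ (k : ℕ) (p q : Fin k → Fin n), 1 ≤ k → k ≤ n - 1 →
      (∀ i, p i < q i) → (∀ i i' : Fin k, i < i' → q i ≤ p i') →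
      (∑ i, ((q i).val - (p i).val)) ≤ (⋃ i, G.NIn' (p i) (q i)).ncard) ∧
  (∀ hn : 0 < n,
      (G.NIn ⟨0, hn⟩ ⟨n - 1, by omega⟩).ncard = n ∧
      (G.NIn' ⟨0, hn⟩ ⟨n - 1, by omega⟩).ncard = n)

/-- Property B. -/
def PropertyB (G : ConvexBip n Y) : Prop :=
  (∀ p q : Fin n, p < q →
      ((p.val = 0 ∧ q.val < n - 1) ∨ (0 < p.val ∧ q.val = n - 1) ∨
        (0 < p.val ∧ q.val < n - 1)) →
      (G.NIn p q).ncard ≤ q.val - p.val + 1) ∧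
  (∀ hn : 0 < n, (G.NIn ⟨0, hn⟩ ⟨n - 1, by omega⟩).ncard ≤ n + 1) ∧
  (∀ (k : ℕ) (p q : Fin k → Fin n), 1 ≤ k → k ≤ n - 1 →
      (∀ i, p i < q i) → (∀ i i' : Fin k, i < i' → q i ≤ p i') →
      (∑ i, ((q i).val - (p i).val)) ≤ (⋃ i, G.NIn' (p i) (q i)).ncard) ∧
  ({y : Y | G.degY y = 1}.ncard ≤ 2 ∧
    (2 ≤ n → ∀ (i : Fin n) (y y' : Y), y ≠ y' → G.degY y = 1 → G.degY y' = 1 →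
      G.adj i y → G.adj i y' → False))

/-- The interval `X_{p..q}` is maximal: `|N_G[X_{p..q}]| = q - p + 1` and no strictly
larger interval (within indices 2..n-1) has the analogous property. -/
def IsMaximalInt (G : ConvexBip n Y) (p q : Fin n) : Prop :=
  (G.NIn p q).ncard = q.val - p.val + 1 ∧
  ¬ ∃ p' q' : Fin n, 0 < p'.val ∧ q'.val < n - 1 ∧ p' ≤ p ∧ q ≤ q' ∧
      (p' < p ∨ q < q') ∧ (G.NIn p' q').ncard = q'.val - p'.val + 1

/-- Monotone convex bipartite graph. -/
def IsMonotone (G : ConvexBip n Y) : Prop :=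
  G.PropertyB ∧
  (¬ ∃ (y : Y) (k : Fin n), G.degY y = 1 ∧ G.adj k y ∧ 0 < k.val ∧ k.val < n - 1) ∧
  (¬ ∃ p q : Fin n, 0 < p.val ∧ p < q ∧ q.val < n - 1 ∧ G.IsMaximalInt p q)

/-- Non-monotone convex bipartite graph (satisfying Property B). -/
def IsNonMonotone (G : ConvexBip n Y) : Prop :=
  G.PropertyB ∧
  ((∃ (y : Y) (k : Fin n), G.degY y = 1 ∧ G.adj k y ∧ 0 < k.val ∧ k.val < n - 1) ∨
   (∃ p q : Fin n, 0 < p.val ∧ p < q ∧ q.val < n - 1 ∧ G.IsMaximalInt p q))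

/-- The interval graph obtained from `G`: keep all edges of `G` and make two distinct
`Y`-vertices adjacent whenever their neighborhoods in `X` intersect. -/
def intervalGraph (G : ConvexBip n Y) : SimpleGraph (Fin n ⊕ Y) where
  Adj u v := G.toGraph.Adj u v ∨
    (∃ y y', u = Sum.inr y ∧ v = Sum.inr y' ∧ y ≠ y' ∧ ∃ i, G.adj i y ∧ G.adj i y')
  symm := ⟨by
    rintro u v (h | ⟨y, y', rfl, rfl, hne, i, h1, h2⟩)
    · exact Or.inl h.symm
    · exact Or.inr ⟨y', y, rfl, rfl, hne.symm, i, h2, h1⟩⟩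
  loopless := ⟨by
    rintro u (h | ⟨y, y', rfl, h, hne, _⟩)
    · exact G.toGraph.loopless.irrefl u h
    · exact hne (Sum.inr.inj h)⟩

/-- `G` has a Hamiltonian cycle. -/
def HasHamCycle {V : Type*} [DecidableEq V] (H : SimpleGraph V) : Prop :=
  ∃ (v : V) (c : H.Walk v v), c.IsHamiltonianCycle

/-- `G` has a Hamiltonian path. -/
def HasHamPath {V : Type*} [DecidableEq V] (H : SimpleGraph V) : Prop :=
  ∃ (u v : V) (p : H.Walk u v), p.IsHamiltonian

/-- A maximal clique of a simple graph. -/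
def IsMaxClique {V : Type*} (H : SimpleGraph V) (s : Set V) : Prop :=
  H.IsClique s ∧ ∀ t : Set V, H.IsClique t → s ⊆ t → s = t

end ConvexBip


/-- if `G` satisfies Property B and has a Hamiltonian path `P` whose
`X`-vertices appear in the convex order, and `1 < p < q < n` with neither `x_p` nor `x_q`
an endpoint or penultimate vertex of `P`, then `P` contains at most `q - p` vertices of
`N_G[X_{p..q}]` (equivalently, `|N_G[X_{p..q}]| ≤ q - p`, as `P` spans all vertices). -/
theorem stmt_15 {n : ℕ} {Y : Type*} [Fintype Y] [DecidableEq Y]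
    (G : ConvexBip n Y) (hB : G.PropertyB)
    (u v : Fin n ⊕ Y) (P : G.toGraph.Walk u v) (hham : P.IsHamiltonian)
    -- the `X`-vertices appear along `P` in the convex order
    (horder : List.Pairwise (· < ·) (P.support.filterMap Sum.getLeft?))
    (p q : Fin n) (hp : 0 < p.val) (hpq : p < q) (hq : q.val < n - 1)
    -- `x_p` is neither an endpoint nor a penultimate vertex of `P`
    (hpEnd : Sum.inl p ∉ P.support.take 2 ∧ Sum.inl p ∉ P.support.reverse.take 2)
    (hqEnd : Sum.inl q ∉ P.support.take 2 ∧ Sum.inl q ∉ P.support.reverse.take 2) :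
    (G.NIn p q).ncard ≤ q.val - p.val := by
  classical
  set S := P.support with hSdef
  have hnd : S.Nodup := hham.isPath.support_nodup
  have hchain : List.Chain' G.toGraph.Adj S := P.isChain_adj_support
  have hadj : ∀ (k : ℕ) (h : k + 1 < S.length), G.toGraph.Adj S[k] S[k+1] := by
    intro k h
    exact List.isChain_iff_getElem.mp hchain k (by omega)
  have hn : 3 ≤ n := by omega
  -- order lemma
  have hord : ∀ (a b : ℕ) (hb : b < S.length) (hab : a < b) (i j : Fin n),
      S[a]'(by omega) = Sum.inl i → S[b] = Sum.inl j → i < j := by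
    intro a b hb hab i j hi hj
    have hsorted := horder
    have heq : List.filterMap Sum.getLeft? S =
        List.filterMap Sum.getLeft? (S.take (a+1)) ++ List.filterMap Sum.getLeft? (S.drop (a+1)) := by
      rw [← List.filterMap_append, List.take_append_drop]
    rw [heq] at hsorted
    rw [List.pairwise_append] at hsorted
    refine hsorted.2.2 i ?_ j ?_
    · refine List.mem_filterMap.2 ⟨Sum.inl i, ?_, rfl⟩
      rw [← hi]
      have h1 : (S.take (a+1))[a]'(by simp [List.length_take]; omega) = S[a]'(by omega) :=
        List.getElem_take
      rw [← h1]; exact List.getElem_mem _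
    · refine List.mem_filterMap.2 ⟨Sum.inl j, ?_, rfl⟩
      rw [← hj]
      have h1 : (S.drop (a+1))[b - (a+1)]'(by simp [List.length_drop]; omega) = S[b] := by
        rw [List.getElem_drop]; congr 1; omega
      rw [← h1]; exact List.getElem_mem _
  -- adjacency extraction
  have hYX : ∀ (y : Y) (w : Fin n ⊕ Y), G.toGraph.Adj (Sum.inr y) w →
      ∃ i, w = Sum.inl i ∧ G.adj i y := by
    rintro y w (⟨i, y', h1, h2, h3⟩ | ⟨i, y', h1, h2, h3⟩)
    · exact absurd h1 (by simp)
    · exact ⟨i, h2, by cases h1; exact h3⟩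
  have hmemS : ∀ w : Fin n ⊕ Y, w ∈ S := fun w => hham.mem_support w
  have hidx : ∀ w : Fin n ⊕ Y, ∃ (m : ℕ) (hm : m < S.length), S[m] = w := by
    intro w
    exact List.mem_iff_getElem.mp (hmemS w)
  -- key lemma
  have key : ∀ y ∈ G.NIn p q, ∃ (j : Fin n) (k : ℕ) (h : k + 1 < S.length),
      p < j ∧ j ≤ q ∧ S[k]'(by omega) = Sum.inr y ∧ S[k+1] = Sum.inl j := by
    intro y hy
    obtain ⟨k, hk, hSk⟩ := hidx (Sum.inr y)
    -- k+1 < S.length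
    have hk1 : k + 1 < S.length := by
      by_contra hcon
      have hkeq : k = S.length - 1 := by omega
      obtain ⟨m0, hm0, hSm0⟩ := hidx (Sum.inl p)
      have hm0k : m0 ≠ k := by rintro rfl; rw [hSk] at hSm0; simp at hSm0
      have hk1' : 1 ≤ k := by omega
      -- predecessor
      have hadj' := hadj (k-1) (by omega)
      have he : S[k-1+1]'(by omega) = Sum.inr y := by rw [← hSk]; congr 1; omega
      rw [he] at hadj'
      obtain ⟨i, hi1, hi2⟩ := hYX y _ hadj'.symm
      have hiq : i ≤ q := (hy i hi2).2
      obtain ⟨m, hm, hSm⟩ := hidx (Sum.inl ⟨n-1, by omega⟩)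
      have hmk : m ≠ k := by rintro rfl; rw [hSk] at hSm; simp at hSm
      have hmk1 : m ≠ k - 1 := by
        intro h; subst h; rw [hi1] at hSm
        have : i = (⟨n-1, by omega⟩ : Fin n) := by simpa using hSm
        rw [this] at hiq
        simp [Fin.le_def] at hiq; omega
      have hmlt : m < k - 1 := by omega
      have hlt := hord m (k-1) (by omega) hmlt _ _ hSm hi1
      have h5 : (n-1 : ℕ) < i.val := hlt
      have h6 : i.val ≤ q.val := hiq
      omega
    -- successor
    have hadj2 := hadj k hk1
    rw [hSk] at hadj2
    obtain ⟨j, hj1, hj2⟩ := hYX y _ hadj2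
    have hjq : j ≤ q := (hy j hj2).2
    have hpj : p ≤ j := (hy j hj2).1
    have hplt : p < j := by
      rcases Nat.eq_zero_or_pos k with hk0 | hk0
      · -- k = 0 : impossible
        exfalso
        subst hk0
        obtain ⟨m, hm, hSm⟩ := hidx (Sum.inl ⟨0, by omega⟩)
        have hm0 : m ≠ 0 := by rintro rfl; rw [hSk] at hSm; simp at hSm
        have hm1 : m ≠ 1 := by
          rintro rfl
          have h2 : Sum.inl j = Sum.inl (⟨0, by omega⟩ : Fin n) := hj1.symm.trans hSm
          have h3 : j = (⟨0, by omega⟩ : Fin n) := by simpa using h2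
          rw [h3] at hpj; simp [Fin.le_def] at hpj; omega
        have := hord 1 m hm (by omega) _ _ hj1 hSm
        simp [Fin.lt_def] at this
      · -- k ≥ 1 : predecessor gives p ≤ i < j
        have hadj' := hadj (k-1) (by omega)
        have he : S[k-1+1]'(by omega) = Sum.inr y := by rw [← hSk]; congr 1; omega
        rw [he] at hadj'
        obtain ⟨i, hi1, hi2⟩ := hYX y _ hadj'.symm
        have hpi : p ≤ i := (hy i hi2).1
        have := hord (k-1) (k+1) hk1 (by omega) _ _ hi1 hj1
        exact lt_of_le_of_lt hpi this
    exact ⟨j, k, hk1, hplt, hjq, hSk, hj1⟩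
  -- build the injection
  set f : Y → Fin n := fun y => if h : y ∈ G.NIn p q then (key y h).choose else p with hf
  have hmaps : ∀ y ∈ G.NIn p q, f y ∈ (↑(Finset.Ioc p q) : Set (Fin n)) := by
    intro y hy
    obtain ⟨k, hk, h1, h2, _, _⟩ := (key y hy).choose_spec
    simp only [hf, dif_pos hy, Finset.coe_Ioc, Set.mem_Ioc]
    exact ⟨h1, h2⟩
  have hinj : Set.InjOn f (G.NIn p q) := by
    intro y1 hy1 y2 hy2 hfeq
    simp only [hf, dif_pos hy1, dif_pos hy2] at hfeq
    obtain ⟨k1, hk1, _, _, hS1, hS1'⟩ := (key y1 hy1).choose_spec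
    obtain ⟨k2, hk2, _, _, hS2, hS2'⟩ := (key y2 hy2).choose_spec
    rw [hfeq] at hS1'
    have : k1 + 1 = k2 + 1 := hnd.getElem_inj_iff.mp (by rw [hS1', hS2'])
    have hk12 : k1 = k2 := by omega
    subst hk12
    rw [hS1] at hS2
    exact Sum.inr.inj hS2
  calc (G.NIn p q).ncard ≤ (↑(Finset.Ioc p q) : Set (Fin n)).ncard :=
        Set.ncard_le_ncard_of_injOn f hmaps hinj (Set.toFinite _)
    _ = q.val - p.val := by rw [Set.ncard_coe_finset, Fin.card_Ioc]
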